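/- arXiv:1903.00725 — 2 statements merged into one kernel-verified Lean document; each statement's English description precedes it below -/
import Mathlib

section
/- Consider a finite discounted MDP with state set S, action set A, kernel P, reward r, and discount γ ∈ [0,1), together with a regularizer φ satisfying Assumption 2 and λ ≥ 0. Let V* be the unique fixed point of the unregularized Bellman operator T and V*_λ the unique fixed point of the regularized Bellman operator T_λ. Then for every state s: V*(s) ≤ V*_λ(s) ≤ V*(s) + (λ/(1−γ))·φ(1/|A|); in particular ‖V*_λ − V*‖_∞ ≤ (λ/(1−γ))·φ(1/|A|). -/
open Filter

/-- A regularizer: on the interval (0,1], φ is nonincreasing, φ(1) = 0,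
φ is differentiable, and `x ↦ x·φ(x)` is strictly concave. -/
def IsRegularizer (φ : ℝ → ℝ) : Prop :=
  AntitoneOn φ (Set.Ioc 0 1) ∧ φ 1 = 0 ∧ DifferentiableOn ℝ φ (Set.Ioc 0 1) ∧
    StrictConcaveOn ℝ (Set.Ioc 0 1) (fun x => x * φ x)

/-- Assumption 2: `x·φ(x) → 0` as `x → 0⁺`. -/
def Assumption2 (φ : ℝ → ℝ) : Prop :=
  Tendsto (fun x => x * φ x) (nhdsWithin 0 (Set.Ioi 0)) (nhds 0)

/-- The regularized Bellman operator `T_λ`: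
`(T_λ V) s = sup_{p ∈ Δ_A} ∑ a, (p a * (r s a + γ ∑ s', P s a s' * V s') + λ * f_φ(p a))`,
where `f_φ(x) = x * φ x` (so `f_φ(0) = 0` automatically). -/
noncomputable def Treg {S A : Type*} [Fintype S] [Fintype A]
    (P : S → A → S → ℝ) (r : S → A → ℝ) (γ : ℝ) (φ : ℝ → ℝ) (lam : ℝ)
    (V : S → ℝ) (s : S) : ℝ :=
  sSup ((fun p : A → ℝ =>
      ∑ a, (p a * (r s a + γ * ∑ s', P s a s' * V s') + lam * (p a * φ (p a)))) ''
    {p | (∀ a, 0 ≤ p a) ∧ ∑ a, p a = 1})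

section Helpers

variable {A : Type*} [Fintype A] [Nonempty A] {φ : ℝ → ℝ}

lemma phi_nonneg_aux (hφ : IsRegularizer φ) {x : ℝ} (hx0 : 0 < x) (hx1 : x ≤ 1) :
    0 ≤ φ x := by
  have := hφ.1 (Set.mem_Ioc.2 ⟨hx0, hx1⟩) (Set.mem_Ioc.2 ⟨one_pos, le_refl 1⟩) hx1
  rw [hφ.2.1] at this
  exact this

lemma f_nonneg_aux (hφ : IsRegularizer φ) {x : ℝ} (hx0 : 0 ≤ x) (hx1 : x ≤ 1) :
    0 ≤ x * φ x := by
  rcases eq_or_lt_of_le hx0 with h | h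
  · simp [← h]
  · exact mul_nonneg hx0 (phi_nonneg_aux hφ h hx1)

lemma inv_card_mem_Ioc : (1 / (Fintype.card A : ℝ)) ∈ Set.Ioc (0:ℝ) 1 := by
  have hn : (0:ℝ) < (Fintype.card A : ℝ) := by
    exact_mod_cast Fintype.card_pos
  constructor
  · positivity
  · rw [div_le_one hn]
    exact_mod_cast Fintype.card_pos

lemma phi_card_nonneg (hφ : IsRegularizer φ) : 0 ≤ φ (1 / (Fintype.card A : ℝ)) :=
  phi_nonneg_aux hφ inv_card_mem_Ioc.1 inv_card_mem_Ioc.2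

lemma jensen_bound (hφ : IsRegularizer φ) {p : A → ℝ}
    (h0 : ∀ a, 0 ≤ p a) (h1 : ∑ a, p a = 1) :
    ∑ a, p a * φ (p a) ≤ φ (1 / (Fintype.card A : ℝ)) := by
  classical
  set t := Finset.univ.filter (fun a => 0 < p a) with ht
  have hts : ∑ a ∈ t, p a = 1 := by
    rw [ht, Finset.sum_filter_of_ne (fun a _ h => (h0 a).lt_of_ne (Ne.symm h)), h1]
  have htf : ∑ a ∈ t, p a * φ (p a) = ∑ a, p a * φ (p a) := by
    refine Finset.sum_filter_of_ne (fun a _ h => ?_)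
    rcases eq_or_lt_of_le (h0 a) with h' | h'
    · exact absurd (by simp [← h']) h
    · exact h'
  have htne : t.Nonempty := by
    by_contra h
    rw [Finset.not_nonempty_iff_eq_empty] at h
    rw [h, Finset.sum_empty] at hts
    norm_num at hts
  have hkpos : 0 < (t.card : ℝ) := by exact_mod_cast Finset.card_pos.2 htne
  have hmem : ∀ a ∈ t, p a ∈ Set.Ioc (0:ℝ) 1 := by
    intro a ha
    refine ⟨(Finset.mem_filter.1 ha).2, ?_⟩
    calc p a ≤ ∑ b ∈ t, p b := Finset.single_le_sum (fun b _ => h0 b) ha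
    _ = 1 := hts
  have hj := (hφ.2.2.2.concaveOn).le_map_sum (t := t) (w := fun _ => (t.card : ℝ)⁻¹)
      (p := p) (fun _ _ => by positivity)
      (by rw [Finset.sum_const, nsmul_eq_mul, mul_inv_cancel₀ (ne_of_gt hkpos)]) hmem
  simp only [smul_eq_mul] at hj
  rw [show ∑ x ∈ t, ((t.card : ℝ))⁻¹ * p x = ((t.card : ℝ))⁻¹ by
    rw [← Finset.mul_sum, hts, mul_one], ← Finset.mul_sum] at hj
  have h2 : ∑ a ∈ t, p a * φ (p a) ≤ φ ((t.card : ℝ)⁻¹) := by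
    have := (mul_le_mul_iff_right₀ (inv_pos.2 hkpos)).1 hj
    linarith [this]
  have hk1 : (t.card : ℝ)⁻¹ ∈ Set.Ioc (0:ℝ) 1 := by
    constructor
    · positivity
    · rw [inv_le_one_iff₀]
      right
      exact_mod_cast Finset.card_pos.2 htne
  have hkn : (1 / (Fintype.card A : ℝ)) ≤ (t.card : ℝ)⁻¹ := by
    rw [one_div]
    apply inv_anti₀ hkpos
    exact_mod_cast (Finset.card_filter_le _ _).trans_eq (Finset.card_univ)
  have h3 : φ ((t.card : ℝ)⁻¹) ≤ φ (1 / (Fintype.card A : ℝ)) :=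
    hφ.1 inv_card_mem_Ioc hk1 hkn
  calc ∑ a, p a * φ (p a) = ∑ a ∈ t, p a * φ (p a) := htf.symm
    _ ≤ φ ((t.card : ℝ)⁻¹) := h2
    _ ≤ _ := h3

variable {S : Type*} [Fintype S] [Nonempty S]
variable {P : S → A → S → ℝ} {r : S → A → ℝ} {γ : ℝ} {lam : ℝ}

lemma simplex_nonempty : ({p : A → ℝ | (∀ a, 0 ≤ p a) ∧ ∑ a, p a = 1}).Nonempty := by
  refine ⟨fun _ => (Fintype.card A : ℝ)⁻¹, fun a => by positivity, ?_⟩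
  rw [Finset.sum_const, nsmul_eq_mul, Finset.card_univ, mul_inv_cancel₀]
  exact_mod_cast Fintype.card_pos.ne'

lemma treg_bddAbove (hφ : IsRegularizer φ) (hlam : 0 ≤ lam) (V : S → ℝ) (s : S) :
    BddAbove ((fun p : A → ℝ =>
      ∑ a, (p a * (r s a + γ * ∑ s', P s a s' * V s') + lam * (p a * φ (p a)))) ''
    {p | (∀ a, 0 ≤ p a) ∧ ∑ a, p a = 1}) := by
  classical
  set q : A → ℝ := fun a => r s a + γ * ∑ s', P s a s' * V s' with hq
  refine ⟨(Finset.univ.sup' Finset.univ_nonempty q) + lam * φ (1 / (Fintype.card A : ℝ)),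
    ?_⟩
  rintro x ⟨p, ⟨hp0, hp1⟩, rfl⟩
  have hb : ∀ a, p a ≤ 1 := fun a => by
    calc p a ≤ ∑ b, p b := Finset.single_le_sum (fun b _ => hp0 b) (Finset.mem_univ a)
    _ = 1 := hp1
  have h1 : ∑ a, p a * q a ≤ Finset.univ.sup' Finset.univ_nonempty q := by
    calc ∑ a, p a * q a ≤ ∑ a, p a * (Finset.univ.sup' Finset.univ_nonempty q) :=
          Finset.sum_le_sum (fun a _ =>
            mul_le_mul_of_nonneg_left (Finset.le_sup' q (Finset.mem_univ a)) (hp0 a))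
    _ = _ := by rw [← Finset.sum_mul, hp1, one_mul]
  have h2 : lam * ∑ a, p a * φ (p a) ≤ lam * φ (1 / (Fintype.card A : ℝ)) :=
    mul_le_mul_of_nonneg_left (jensen_bound hφ hp0 hp1) hlam
  calc ∑ a, (p a * q a + lam * (p a * φ (p a)))
      = ∑ a, p a * q a + lam * ∑ a, p a * φ (p a) := by
        rw [Finset.sum_add_distrib, Finset.mul_sum]
    _ ≤ _ := add_le_add h1 h2

lemma treg_contract (hP : ∀ s a s', 0 ≤ P s a s') (hPsum : ∀ s a, ∑ s', P s a s' = 1)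
    (hγ0 : 0 ≤ γ) (hφ : IsRegularizer φ) (hlam : 0 ≤ lam) {V W : S → ℝ} {M : ℝ}
    (hM : ∀ s', V s' - W s' ≤ M) (s : S) :
    Treg P r γ φ lam V s ≤ Treg P r γ φ lam W s + γ * M := by
  classical
  rw [Treg, Treg]
  refine csSup_le (simplex_nonempty.image _) ?_
  rintro x ⟨p, hp, rfl⟩
  obtain ⟨hp0, hp1⟩ := hp
  have key : ∑ a, (p a * (r s a + γ * ∑ s', P s a s' * V s') + lam * (p a * φ (p a)))
      ≤ (∑ a, (p a * (r s a + γ * ∑ s', P s a s' * W s') + lam * (p a * φ (p a))))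
        + γ * M := by
    have hterm : ∀ a, p a * (r s a + γ * ∑ s', P s a s' * V s')
        ≤ p a * (r s a + γ * ∑ s', P s a s' * W s') + p a * (γ * M) := by
      intro a
      have hPV : ∑ s', P s a s' * V s' ≤ (∑ s', P s a s' * W s') + M := by
        have : ∑ s', P s a s' * V s' ≤ ∑ s', P s a s' * (W s' + M) :=
          Finset.sum_le_sum (fun s' _ =>
            mul_le_mul_of_nonneg_left (by linarith [hM s']) (hP s a s'))
        calc ∑ s', P s a s' * V s' ≤ ∑ s', P s a s' * (W s' + M) := this
        _ = (∑ s', P s a s' * W s') + (∑ s', P s a s') * M := by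
            rw [Finset.sum_mul, ← Finset.sum_add_distrib]
            congr 1; ext s'; ring
        _ = (∑ s', P s a s' * W s') + M := by rw [hPsum s a, one_mul]
      have : r s a + γ * ∑ s', P s a s' * V s'
          ≤ (r s a + γ * ∑ s', P s a s' * W s') + γ * M := by
        nlinarith [mul_le_mul_of_nonneg_left hPV hγ0]
      nlinarith [mul_le_mul_of_nonneg_left this (hp0 a)]
    calc ∑ a, (p a * (r s a + γ * ∑ s', P s a s' * V s') + lam * (p a * φ (p a)))
        ≤ ∑ a, ((p a * (r s a + γ * ∑ s', P s a s' * W s') + lam * (p a * φ (p a)))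
            + p a * (γ * M)) :=
          Finset.sum_le_sum (fun a _ => by linarith [hterm a])
      _ = (∑ a, (p a * (r s a + γ * ∑ s', P s a s' * W s') + lam * (p a * φ (p a))))
            + (∑ a, p a) * (γ * M) := by
          rw [Finset.sum_add_distrib, Finset.sum_mul]
      _ = _ := by rw [hp1, one_mul]
  refine key.trans (add_le_add_left ?_ _)
  exact le_csSup (treg_bddAbove hφ hlam W s) ⟨p, ⟨hp0, hp1⟩, rfl⟩

lemma treg_zero_le (hφ : IsRegularizer φ) (hlam : 0 ≤ lam) (V : S → ℝ) (s : S) :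
    Treg P r γ φ 0 V s ≤ Treg P r γ φ lam V s := by
  rw [Treg, Treg]
  refine csSup_le (simplex_nonempty.image _) ?_
  rintro x ⟨p, hp, rfl⟩
  obtain ⟨hp0, hp1⟩ := hp
  have hb : ∀ a, p a ≤ 1 := fun a => by
    calc p a ≤ ∑ b, p b := Finset.single_le_sum (fun b _ => hp0 b) (Finset.mem_univ a)
    _ = 1 := hp1
  have : ∑ a, (p a * (r s a + γ * ∑ s', P s a s' * V s') + 0 * (p a * φ (p a)))
      ≤ ∑ a, (p a * (r s a + γ * ∑ s', P s a s' * V s') + lam * (p a * φ (p a))) :=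
    Finset.sum_le_sum (fun a _ => by
      have := mul_nonneg hlam (f_nonneg_aux hφ (hp0 a) (hb a))
      linarith)
  exact this.trans (le_csSup (treg_bddAbove hφ hlam V s) ⟨p, ⟨hp0, hp1⟩, rfl⟩)

lemma treg_le_zero_add (hφ : IsRegularizer φ) (hlam : 0 ≤ lam) (V : S → ℝ) (s : S) :
    Treg P r γ φ lam V s ≤ Treg P r γ φ 0 V s + lam * φ (1 / (Fintype.card A : ℝ)) := by
  rw [Treg, Treg]
  refine csSup_le (simplex_nonempty.image _) ?_
  rintro x ⟨p, hp, rfl⟩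
  obtain ⟨hp0, hp1⟩ := hp
  have key : ∑ a, (p a * (r s a + γ * ∑ s', P s a s' * V s') + lam * (p a * φ (p a)))
      = (∑ a, (p a * (r s a + γ * ∑ s', P s a s' * V s') + 0 * (p a * φ (p a))))
        + lam * ∑ a, p a * φ (p a) := by
    rw [Finset.sum_add_distrib, Finset.sum_add_distrib, Finset.mul_sum]
    simp
  dsimp only
  rw [key]
  refine add_le_add ?_ (mul_le_mul_of_nonneg_left (jensen_bound hφ hp0 hp1) hlam)
  exact le_csSup (treg_bddAbove hφ le_rfl V s) ⟨p, ⟨hp0, hp1⟩, rfl⟩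

end Helpers

/-- Performance error between the optimal value `V*` (fixed point of the
unregularized Bellman operator `T = T_0`) and the regularized optimal value `V*_λ`
(fixed point of `T_λ`): `V* s ≤ V*_λ s ≤ V* s + (λ/(1−γ))·φ(1/|A|)`; in particular
`‖V*_λ − V*‖_∞ ≤ (λ/(1−γ))·φ(1/|A|)`. -/
theorem Treg_performance_error (S A : Type*) [Fintype S] [Fintype A] [Nonempty S] [Nonempty A]
    (P : S → A → S → ℝ) (hP : ∀ s a s', 0 ≤ P s a s')
    (hPsum : ∀ s a, ∑ s', P s a s' = 1)
    (r : S → A → ℝ) (γ : ℝ) (hγ0 : 0 ≤ γ) (hγ1 : γ < 1)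
    (φ : ℝ → ℝ) (hφ : IsRegularizer φ) (hA2 : Assumption2 φ)
    (lam : ℝ) (hlam : 0 ≤ lam)
    (Vstar Vlam : S → ℝ)
    (hVstar : Treg P r γ φ 0 Vstar = Vstar)
    (hVlam : Treg P r γ φ lam Vlam = Vlam) :
    (∀ s, Vstar s ≤ Vlam s ∧
        Vlam s ≤ Vstar s + lam / (1 - γ) * φ (1 / (Fintype.card A : ℝ))) ∧
      (⨆ s, |Vlam s - Vstar s|) ≤ lam / (1 - γ) * φ (1 / (Fintype.card A : ℝ)) := by
  set c := φ (1 / (Fintype.card A : ℝ)) with hc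
  have hc0 : 0 ≤ c := phi_card_nonneg hφ
  have hγ' : 0 < 1 - γ := by linarith
  -- lower bound
  have hsub : ∀ s, Vstar s ≤ Vlam s := by
    obtain ⟨s₀, hs₀⟩ := Finite.exists_max (fun s => Vstar s - Vlam s)
    have key : Vstar s₀ ≤ Vlam s₀ + γ * (Vstar s₀ - Vlam s₀) := by
      calc Vstar s₀ = Treg P r γ φ 0 Vstar s₀ := (congrFun hVstar s₀).symm
      _ ≤ Treg P r γ φ lam Vstar s₀ := treg_zero_le hφ hlam Vstar s₀
      _ ≤ Treg P r γ φ lam Vlam s₀ + γ * (Vstar s₀ - Vlam s₀) :=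
          treg_contract hP hPsum hγ0 hφ hlam (fun s' => hs₀ s') s₀
      _ = Vlam s₀ + γ * (Vstar s₀ - Vlam s₀) := by rw [congrFun hVlam s₀]
    have hd : Vstar s₀ - Vlam s₀ ≤ 0 := by nlinarith
    intro s
    linarith [hs₀ s]
  -- upper bound
  have hsup : ∀ s, Vlam s - Vstar s ≤ lam / (1 - γ) * c := by
    obtain ⟨s₁, hs₁⟩ := Finite.exists_max (fun s => Vlam s - Vstar s)
    have key : Vlam s₁ ≤ Vstar s₁ + γ * (Vlam s₁ - Vstar s₁) + lam * c := by
      calc Vlam s₁ = Treg P r γ φ lam Vlam s₁ := (congrFun hVlam s₁).symm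
      _ ≤ Treg P r γ φ 0 Vlam s₁ + lam * c := treg_le_zero_add hφ hlam Vlam s₁
      _ ≤ (Treg P r γ φ 0 Vstar s₁ + γ * (Vlam s₁ - Vstar s₁)) + lam * c := by
          have hcon : Treg P r γ φ 0 Vlam s₁ ≤
              Treg P r γ φ 0 Vstar s₁ + γ * (Vlam s₁ - Vstar s₁) :=
            treg_contract hP hPsum hγ0 hφ le_rfl (fun s' => hs₁ s') s₁
          linarith
      _ = Vstar s₁ + γ * (Vlam s₁ - Vstar s₁) + lam * c := by rw [congrFun hVstar s₁]
    have he : Vlam s₁ - Vstar s₁ ≤ lam / (1 - γ) * c := by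
      rw [div_mul_eq_mul_div, le_div_iff₀ hγ']
      nlinarith
    intro s
    exact (hs₁ s).trans he
  refine ⟨fun s => ⟨hsub s, by linarith [hsup s]⟩, ?_⟩
  refine ciSup_le fun s => ?_
  rw [abs_of_nonneg (by linarith [hsub s])]
  exact hsup s
end

section
/- Let A be a nonempty finite set, let φ be a regularizer satisfying Assumption 2, and let Q : A → ℝ have a unique maximizer a* ∈ A. Suppose f'_φ(x) = φ(x) + x·φ'(x) tends to a finite limit L as x → 0⁺. If λ > 0 satisfies λ·(L − f'_φ(1)) < Q a* − Q a for every a ≠ a*, then every maximizer p ∈ Δ_A of the per-state regularized objective F_λ(p) = ∑_a (p a · Q a + λ·f_φ(p a)) satisfies p a = 0 for all a ≠ a* and p a* = 1; i.e., for sufficiently small λ the regularized optimal policy concentrates on the greedy action. -/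
open Filter

/-- The derivative of `f_φ(x) = x·φ(x)` on (0,1], namely `f'_φ(x) = φ(x) + x·φ'(x)`. -/
noncomputable def fderivPhi (φ : ℝ → ℝ) (x : ℝ) : ℝ :=
  φ x + x * derivWithin φ (Set.Ioc 0 1) x

section Aux

variable {φ : ℝ → ℝ}

lemma regDeriv (hφ : IsRegularizer φ) {x : ℝ} (hx : x ∈ Set.Ioc (0:ℝ) 1) :
    HasDerivWithinAt (fun y => y * φ y) (fderivPhi φ x) (Set.Ioc (0:ℝ) 1) x := by
  have h := ((hφ.2.2.1 x hx).hasDerivWithinAt)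
  have h2 := (hasDerivWithinAt_id x (Set.Ioc (0:ℝ) 1)).mul h
  simpa [fderivPhi, id, Pi.mul_def] using h2

lemma fderivPhi_anti (hφ : IsRegularizer φ) {x y : ℝ} (hx : x ∈ Set.Ioc (0:ℝ) 1)
    (hy : y ∈ Set.Ioc (0:ℝ) 1) (hxy : x ≤ y) : fderivPhi φ y ≤ fderivPhi φ x := by
  rcases eq_or_lt_of_le hxy with rfl | h
  · exact le_refl _
  · have hconc := hφ.2.2.2.concaveOn
    have h1 := hconc.le_slope_of_hasDerivWithinAt hx hy h (regDeriv hφ hy)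
    have h2 := hconc.slope_le_of_hasDerivWithinAt hx hy h (regDeriv hφ hx)
    exact h1.trans h2

lemma fderivPhi_one_le {L : ℝ} (hφ : IsRegularizer φ)
    (hL : Tendsto (fderivPhi φ) (nhdsWithin 0 (Set.Ioi 0)) (nhds L)) :
    fderivPhi φ 1 ≤ L := by
  refine ge_of_tendsto hL ?_
  filter_upwards [Ioo_mem_nhdsGT_of_mem (Set.left_mem_Ico.2 one_pos)] with x hx
  exact fderivPhi_anti hφ ⟨hx.1, hx.2.le⟩ ⟨one_pos, le_refl _⟩ hx.2.le

lemma f_le_L {L : ℝ} (hφ : IsRegularizer φ) (hA2 : Assumption2 φ)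
    (hL : Tendsto (fderivPhi φ) (nhdsWithin 0 (Set.Ioi 0)) (nhds L))
    {t : ℝ} (ht : t ∈ Set.Ioc (0:ℝ) 1) : t * φ t ≤ t * L := by
  have hconc := hφ.2.2.2.concaveOn
  have hev : ∀ᶠ x in nhdsWithin (0:ℝ) (Set.Ioi 0),
      (t * φ t - x * φ x) / (t - x) ≤ fderivPhi φ x := by
    filter_upwards [Ioo_mem_nhdsGT_of_mem (Set.left_mem_Ico.2 ht.1)] with x hx
    have hxS : x ∈ Set.Ioc (0:ℝ) 1 := ⟨hx.1, hx.2.le.trans ht.2⟩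
    have := hconc.slope_le_of_hasDerivWithinAt hxS ht hx.2 (regDeriv hφ hxS)
    rwa [slope_def_field] at this
  have hx0 : Tendsto (fun x : ℝ => x) (nhdsWithin (0:ℝ) (Set.Ioi 0)) (nhds 0) :=
    (continuous_id.tendsto 0).mono_left nhdsWithin_le_nhds
  have h1 : Tendsto (fun x => (t * φ t - x * φ x) / (t - x))
      (nhdsWithin (0:ℝ) (Set.Ioi 0)) (nhds ((t * φ t - 0) / (t - 0))) :=
    (tendsto_const_nhds.sub hA2).div (tendsto_const_nhds.sub hx0) (by simpa using ht.1.ne')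
  have := le_of_tendsto_of_tendsto h1 hL hev
  rw [sub_zero, sub_zero, div_le_iff₀ ht.1] at this
  linarith [this]

lemma key_ineq {L : ℝ} (hφ : IsRegularizer φ) (hA2 : Assumption2 φ)
    (hL : Tendsto (fderivPhi φ) (nhdsWithin 0 (Set.Ioi 0)) (nhds L))
    {s t : ℝ} (hs : 0 ≤ s) (ht : 0 < t) (hst : s + t ≤ 1) :
    t * (fderivPhi φ 1 - L) ≤ (s + t) * φ (s + t) - s * φ s - t * φ t := by
  have hstS : s + t ∈ Set.Ioc (0:ℝ) 1 := ⟨by linarith, hst⟩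
  have htS : t ∈ Set.Ioc (0:ℝ) 1 := ⟨ht, by linarith⟩
  have hfl : t * φ t ≤ t * L := f_le_L hφ hA2 hL htS
  have h1L : fderivPhi φ 1 ≤ L := fderivPhi_one_le hφ hL
  rcases eq_or_lt_of_le hs with rfl | hs'
  · simp only [zero_add, zero_mul, sub_zero, sub_self]
    nlinarith
  · have hsS : s ∈ Set.Ioc (0:ℝ) 1 := ⟨hs', by linarith⟩
    have hconc := hφ.2.2.2.concaveOn
    have h2 := hconc.le_slope_of_hasDerivWithinAt hsS hstS (by linarith) (regDeriv hφ hstS)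
    rw [slope_def_field] at h2
    have h2' : t * fderivPhi φ (s + t) ≤ (s + t) * φ (s + t) - s * φ s := by
      have ht' : (s + t) - s = t := by ring
      rw [ht'] at h2
      calc t * fderivPhi φ (s + t) ≤ t * (((s + t) * φ (s + t) - s * φ s) / t) := by
            exact mul_le_mul_of_nonneg_left h2 ht.le
        _ = (s + t) * φ (s + t) - s * φ s := by field_simp
    have h3 : fderivPhi φ 1 ≤ fderivPhi φ (s + t) :=
      fderivPhi_anti hφ hstS ⟨one_pos, le_refl _⟩ hst
    nlinarith [mul_le_mul_of_nonneg_left h3 ht.le]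

end Aux

/-- If `Q` has a unique maximizer `a*`, `f'_φ(x) → L` (finite) as `x → 0⁺` and
`λ·(L − f'_φ(1)) < Q a* − Q a` for all `a ≠ a*`, then every maximizer of the
per-state regularized objective concentrates on the greedy action `a*`. -/
theorem maximizer_concentrates_for_small_lambda (A : Type*) [Fintype A] [Nonempty A]
    (φ : ℝ → ℝ) (hφ : IsRegularizer φ) (hA2 : Assumption2 φ)
    (Q : A → ℝ) (astar : A) (hstar : ∀ a, a ≠ astar → Q a < Q astar)
    (L : ℝ) (hL : Tendsto (fderivPhi φ) (nhdsWithin 0 (Set.Ioi 0)) (nhds L))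
    (lam : ℝ) (hlam : 0 < lam)
    (hsmall : ∀ a, a ≠ astar → lam * (L - fderivPhi φ 1) < Q astar - Q a)
    (p : A → ℝ) (hp0 : ∀ a, 0 ≤ p a) (hp1 : ∑ a, p a = 1)
    (hmax : ∀ q : A → ℝ, (∀ a, 0 ≤ q a) → (∑ a, q a = 1) →
      (∑ a, (q a * Q a + lam * (q a * φ (q a)))) ≤
        ∑ a, (p a * Q a + lam * (p a * φ (p a)))) :
    (∀ a, a ≠ astar → p a = 0) ∧ p astar = 1 := by
  classical
  have h0 : ∀ a, a ≠ astar → p a = 0 := by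
    intro a ha
    by_contra hpa
    have ht : 0 < p a := (hp0 a).lt_of_ne (Ne.symm hpa)
    have hst : p astar + p a ≤ 1 := by
      have hsum : ({astar, a} : Finset A).sum p ≤ ∑ b, p b :=
        Finset.sum_le_sum_of_subset_of_nonneg (Finset.subset_univ _) (fun b _ _ => hp0 b)
      rwa [Finset.sum_pair (Ne.symm ha), hp1] at hsum
    set q : A → ℝ := fun b => if b = a then 0 else if b = astar then p astar + p a else p b
      with hqdef
    have hqa : q a = 0 := by simp [hqdef]
    have hqstar : q astar = p astar + p a := by simp [hqdef, Ne.symm ha]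
    have hqother : ∀ b, b ≠ a → b ≠ astar → q b = p b := by
      intro b h1 h2; simp [hqdef, h1, h2]
    have hq0 : ∀ b, 0 ≤ q b := by
      intro b
      rcases eq_or_ne b a with rfl | h1
      · rw [hqa]
      · rcases eq_or_ne b astar with rfl | h2
        · rw [hqstar]; linarith [hp0 b, hp0 a]
        · rw [hqother b h1 h2]; exact hp0 b
    have hvanish : ∀ b ∈ Finset.univ, b ∉ ({a, astar} : Finset A) → q b - p b = 0 := by
      intro b _ hb
      simp only [Finset.mem_insert, Finset.mem_singleton, not_or] at hb
      rw [hqother b hb.1 hb.2, sub_self]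
    have hqp : ∑ b, (q b - p b) = 0 := by
      rw [← Finset.sum_subset (Finset.subset_univ ({a, astar} : Finset A)) hvanish,
        Finset.sum_pair ha, hqa, hqstar]
      ring
    have hq1 : ∑ b, q b = 1 := by
      have := Finset.sum_sub_distrib (s := (Finset.univ : Finset A)) (f := q) (g := p)
      rw [this, hp1] at hqp
      linarith
    have hvanish2 : ∀ b ∈ Finset.univ, b ∉ ({a, astar} : Finset A) →
        (q b * Q b + lam * (q b * φ (q b))) - (p b * Q b + lam * (p b * φ (p b))) = 0 := by
      intro b _ hb
      simp only [Finset.mem_insert, Finset.mem_singleton, not_or] at hb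
      rw [hqother b hb.1 hb.2, sub_self]
    have hD : ∑ b, (q b * Q b + lam * (q b * φ (q b)))
        - ∑ b, (p b * Q b + lam * (p b * φ (p b)))
        = p a * (Q astar - Q a)
          + lam * ((p astar + p a) * φ (p astar + p a) - p astar * φ (p astar)
            - p a * φ (p a)) := by
      rw [← Finset.sum_sub_distrib,
        ← Finset.sum_subset (Finset.subset_univ ({a, astar} : Finset A)) hvanish2,
        Finset.sum_pair ha, hqa, hqstar]
      ring
    have hkey := key_ineq hφ hA2 hL (hp0 astar) ht hst
    have hq_le := hmax q hq0 hq1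
    have h5 := hsmall a ha
    have hpos : 0 < p a * (Q astar - Q a)
        + lam * ((p astar + p a) * φ (p astar + p a) - p astar * φ (p astar)
          - p a * φ (p a)) := by
      nlinarith [mul_le_mul_of_nonneg_left hkey hlam.le,
        mul_lt_mul_of_pos_left h5 ht]
    linarith [hq_le, hD, hpos]
  have h1 : p astar = 1 := by
    have := Finset.sum_eq_single_of_mem astar (Finset.mem_univ astar)
      (fun b _ hb => h0 b hb)
    rw [this] at hp1
    exact hp1
  exact ⟨h0, h1⟩
end
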